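/- Let X and Y be independent, identically distributed nonnegative real random variables with atomless law, and let C be a random variable with values in [0,1] satisfying P(C = 1) < 1, independent of (X, Y). Then P(X > Y·C) > 1/2. -/

import Mathlib

open MeasureTheory
open scoped ENNReal

lemma aux_diag_null (ν : Measure ℝ) [SFinite ν] (hat : ∀ x : ℝ, ν {x} = 0) :
    (ν.prod ν) {p : ℝ × ℝ | p.1 = p.2} = 0 := by
  have hmeas : MeasurableSet {p : ℝ × ℝ | p.1 = p.2} :=
    measurableSet_eq_fun measurable_fst measurable_snd
  rw [Measure.prod_apply hmeas]
  have : ∀ x : ℝ, ν (Prod.mk x ⁻¹' {p : ℝ × ℝ | p.1 = p.2}) = 0 := by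
    intro x
    have : (Prod.mk x ⁻¹' {p : ℝ × ℝ | p.1 = p.2}) = {x} := by
      ext y; simp [eq_comm]
    rw [this]; exact hat x
  rw [lintegral_congr this, lintegral_zero]

lemma aux_swap (ν : Measure ℝ) [SFinite ν] :
    (ν.prod ν) {p : ℝ × ℝ | p.2 < p.1} = (ν.prod ν) {p : ℝ × ℝ | p.1 < p.2} := by
  have hm : MeasurableSet {p : ℝ × ℝ | p.2 < p.1} :=
    measurableSet_lt measurable_snd measurable_fst
  conv_lhs => rw [← Measure.prod_swap (μ := ν) (ν := ν)]
  rw [Measure.map_apply measurable_swap hm]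
  rfl

lemma aux_half (ν : Measure ℝ) [IsProbabilityMeasure ν] (hat : ∀ x : ℝ, ν {x} = 0) :
    (ν.prod ν) {p : ℝ × ℝ | p.2 < p.1} = 1 / 2 := by
  have hm1 : MeasurableSet {p : ℝ × ℝ | p.2 < p.1} :=
    measurableSet_lt measurable_snd measurable_fst
  have hm2 : MeasurableSet {p : ℝ × ℝ | p.1 < p.2} :=
    measurableSet_lt measurable_fst measurable_snd
  have hdiag := aux_diag_null ν hat
  have hsum : (ν.prod ν) {p : ℝ × ℝ | p.2 < p.1} + (ν.prod ν) {p : ℝ × ℝ | p.1 < p.2}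
      = 1 := by
    have hunion : (ν.prod ν) ({p : ℝ × ℝ | p.2 < p.1} ∪ {p : ℝ × ℝ | p.1 < p.2}) =
        (ν.prod ν) {p : ℝ × ℝ | p.2 < p.1} + (ν.prod ν) {p : ℝ × ℝ | p.1 < p.2} := by
      apply measure_union _ hm2
      rw [Set.disjoint_left]
      intro p hp hp'
      simp only [Set.mem_setOf_eq] at hp hp'
      exact lt_asymm hp hp'
    have hcover : ({p : ℝ × ℝ | p.2 < p.1} ∪ {p : ℝ × ℝ | p.1 < p.2})ᶜ
        = {p : ℝ × ℝ | p.1 = p.2} := by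
      ext p; simp [not_lt, le_antisymm_iff, And.comm]
    have : (ν.prod ν) ({p : ℝ × ℝ | p.2 < p.1} ∪ {p : ℝ × ℝ | p.1 < p.2}) = 1 :=
      (prob_compl_eq_zero_iff (hm1.union hm2)).mp (by rw [hcover]; exact hdiag)
    rw [← hunion, this]
  rw [aux_swap ν] at hsum
  rw [aux_swap ν]
  rw [ENNReal.eq_div_iff (by norm_num) (by norm_num), two_mul]
  exact hsum

lemma aux_pos (ν : Measure ℝ) [IsProbabilityMeasure ν] (hat : ∀ x : ℝ, ν {x} = 0)
    (hneg : ν (Set.Iio 0) = 0) (c₀ : ℝ) (hc0 : 0 ≤ c₀) (hc1 : c₀ < 1) :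
    0 < (ν.prod ν) {p : ℝ × ℝ | c₀ * p.2 < p.1 ∧ p.1 < p.2} := by
  set r : ℝ := (1 + c₀) / 2 with hr
  have hr0 : (0:ℝ) < r := by rw [hr]; linarith
  have hrc : c₀ < r := by rw [hr]; linarith
  have hr1 : r < 1 := by rw [hr]; linarith
  have hIoi : ν (Set.Ioi 0) = 1 := by
    have hIic : ν (Set.Iic 0) = 0 := by
      have he : Set.Iic (0:ℝ) = Set.Iio 0 ∪ {0} := by
        ext x; simp [le_iff_lt_or_eq]
      rw [he]
      refine le_antisymm (le_trans (measure_union_le _ _) ?_) zero_le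
      rw [hneg, hat]; simp
    have := prob_compl_eq_one_sub (μ := ν) (measurableSet_Iic (a := (0:ℝ)))
    rw [Set.compl_Iic, hIic] at this
    simpa using this
  have hinv : (1:ℝ) < r⁻¹ := (one_lt_inv₀ hr0).2 hr1
  have hcover : Set.Ioi (0:ℝ) ⊆ ⋃ n : ℤ, Set.Ioc (r ^ (n+1)) (r ^ n) := by
    intro t ht
    obtain ⟨n, hn1, hn2⟩ := exists_mem_Ioc_zpow (x := t) (y := r⁻¹) ht hinv
    refine Set.mem_iUnion.mpr ⟨-(n+1), ?_⟩
    have e1 : r ^ (-(n+1)+1) = (r⁻¹) ^ n := by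
      rw [inv_zpow, ← zpow_neg]; ring_nf
    have e2 : r ^ (-(n+1)) = (r⁻¹) ^ (n+1) := by
      rw [inv_zpow, ← zpow_neg]
    exact ⟨by rw [e1]; exact hn1, by rw [e2]; exact hn2⟩
  obtain ⟨n, hn⟩ : ∃ n : ℤ, 0 < ν (Set.Ioc (r ^ (n+1)) (r ^ n)) := by
    by_contra h
    push_neg at h
    have hz : ν (⋃ n : ℤ, Set.Ioc (r ^ (n+1)) (r ^ n)) = 0 :=
      measure_iUnion_null fun n => le_antisymm (h n) zero_le
    have hle := measure_mono (μ := ν) hcover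
    rw [hIoi, hz] at hle
    norm_num at hle
  set u : ℝ := r ^ (n+1) with hu
  set v : ℝ := r ^ n with hv
  have hu0 : (0:ℝ) < u := zpow_pos hr0 _
  have hv0 : (0:ℝ) < v := zpow_pos hr0 _
  have huv : c₀ * v < u := by
    have : u = r * v := by rw [hu, hv, zpow_add_one₀ (ne_of_gt hr0)]; ring
    rw [this]
    exact mul_lt_mul_of_pos_right hrc hv0
  set I : Set ℝ := Set.Ioc u v with hI
  set T : Set (ℝ × ℝ) := I ×ˢ I with hT
  have hImeas : MeasurableSet I := measurableSet_Ioc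
  have hTmeas : MeasurableSet T := hImeas.prod hImeas
  have hTm : (ν.prod ν) T = ν I * ν I := Measure.prod_prod I I
  have hlt : MeasurableSet {p : ℝ × ℝ | p.1 < p.2} :=
    measurableSet_lt measurable_fst measurable_snd
  have hgt : MeasurableSet {p : ℝ × ℝ | p.2 < p.1} :=
    measurableSet_lt measurable_snd measurable_fst
  have hsym : (ν.prod ν) (T ∩ {p : ℝ × ℝ | p.2 < p.1}) =
      (ν.prod ν) (T ∩ {p : ℝ × ℝ | p.1 < p.2}) := by
    conv_lhs => rw [← Measure.prod_swap (μ := ν) (ν := ν)]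
    rw [Measure.map_apply measurable_swap (hTmeas.inter hgt)]
    congr 1
    ext p
    simp only [Set.mem_preimage, Prod.swap, Set.mem_inter_iff, Set.mem_setOf_eq, hT,
      Set.mem_prod]
    tauto
  have hdiag := aux_diag_null ν hat
  have hsub : T ⊆ (T ∩ {p : ℝ × ℝ | p.1 < p.2}) ∪ (T ∩ {p : ℝ × ℝ | p.2 < p.1}) ∪
      {p : ℝ × ℝ | p.1 = p.2} := by
    intro p hp
    rcases lt_trichotomy p.1 p.2 with h | h | h
    · exact Or.inl (Or.inl ⟨hp, h⟩)
    · exact Or.inr h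
    · exact Or.inl (Or.inr ⟨hp, h⟩)
  have hTpos : 0 < (ν.prod ν) (T ∩ {p : ℝ × ℝ | p.1 < p.2}) := by
    by_contra h
    push_neg at h
    have h0 : (ν.prod ν) (T ∩ {p : ℝ × ℝ | p.1 < p.2}) = 0 := le_antisymm h zero_le
    have : (ν.prod ν) T = 0 := by
      refine le_antisymm (le_trans (measure_mono hsub) ?_) zero_le
      calc (ν.prod ν) ((T ∩ {p : ℝ × ℝ | p.1 < p.2}) ∪ (T ∩ {p : ℝ × ℝ | p.2 < p.1}) ∪
          {p : ℝ × ℝ | p.1 = p.2})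
          ≤ (ν.prod ν) ((T ∩ {p : ℝ × ℝ | p.1 < p.2}) ∪ (T ∩ {p : ℝ × ℝ | p.2 < p.1})) +
            (ν.prod ν) {p : ℝ × ℝ | p.1 = p.2} := measure_union_le _ _
        _ ≤ (ν.prod ν) (T ∩ {p : ℝ × ℝ | p.1 < p.2}) +
            (ν.prod ν) (T ∩ {p : ℝ × ℝ | p.2 < p.1}) +
            (ν.prod ν) {p : ℝ × ℝ | p.1 = p.2} :=
          add_le_add_left (measure_union_le _ _) _
        _ = 0 := by rw [hsym, h0, hdiag]; simp
    rw [hTm] at this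
    exact absurd this (ENNReal.mul_pos hn.ne' hn.ne').ne'
  refine lt_of_lt_of_le hTpos (measure_mono ?_)
  rintro ⟨x, y⟩ ⟨hxy, hlt'⟩
  simp only [hT, Set.mem_prod, hI, Set.mem_Ioc] at hxy
  simp only [Set.mem_setOf_eq] at hlt' ⊢
  refine ⟨?_, hlt'⟩
  calc c₀ * y ≤ c₀ * v := mul_le_mul_of_nonneg_left hxy.2.2 hc0
    _ < u := huv
    _ < x := hxy.1.1

theorem stmt_6 {Ω : Type*} [MeasurableSpace Ω] (μ : Measure Ω) [IsProbabilityMeasure μ]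
    (X Y C : Ω → ℝ) (hX : Measurable X) (hY : Measurable Y) (hC : Measurable C)
    (hXpos : ∀ ω, 0 ≤ X ω) (hYpos : ∀ ω, 0 ≤ Y ω)
    (hindep : ProbabilityTheory.IndepFun X Y μ)
    (hid : Measure.map X μ = Measure.map Y μ)
    (hatomless : ∀ x : ℝ, Measure.map X μ {x} = 0)
    (hCrange : ∀ ω, C ω ∈ Set.Icc (0 : ℝ) 1)
    (hCnot1 : μ {ω | C ω = 1} < 1)
    (hCindep : ProbabilityTheory.IndepFun (fun ω => (X ω, Y ω)) C μ) :
    1 / 2 < μ {ω | Y ω * C ω < X ω} := by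
  set ν := Measure.map X μ with hν
  have hνprob : IsProbabilityMeasure ν := Measure.isProbabilityMeasure_map hX.aemeasurable
  have hXY : Measurable fun ω => (X ω, Y ω) := hX.prodMk hY
  have hjoint : μ.map (fun ω => (X ω, Y ω)) = ν.prod ν := by
    rw [(ProbabilityTheory.indepFun_iff_map_prod_eq_prod_map_map hX.aemeasurable
      hY.aemeasurable).mp hindep, ← hid]
  have key : ∀ S : Set (ℝ × ℝ), MeasurableSet S →
      μ ((fun ω => (X ω, Y ω)) ⁻¹' S) = (ν.prod ν) S := by
    intro S hS
    rw [← hjoint, Measure.map_apply hXY hS]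
  have hneg : ν (Set.Iio 0) = 0 := by
    rw [hν, Measure.map_apply hX measurableSet_Iio]
    have : X ⁻¹' Set.Iio 0 = ∅ := by
      ext ω
      simp only [Set.mem_preimage, Set.mem_Iio, Set.mem_empty_iff_false, iff_false, not_lt]
      exact hXpos ω
    rw [this]; simp
  -- find c₀ < 1 with μ {C ≤ c₀} > 0
  have hC1 : 0 < μ {ω | C ω < 1} := by
    have hset : {ω | C ω < 1} = (C ⁻¹' {1})ᶜ := by
      ext ω
      simp only [Set.mem_setOf_eq, Set.mem_compl_iff, Set.mem_preimage, Set.mem_singleton_iff]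
      constructor
      · intro h he; exact absurd he (ne_of_lt h)
      · intro h; exact lt_of_le_of_ne (hCrange ω).2 h
    rw [hset, prob_compl_eq_one_sub (hC (measurableSet_singleton 1))]
    exact tsub_pos_iff_lt.mpr hCnot1
  obtain ⟨c₀, hc00, hc01, hCc⟩ : ∃ c₀ : ℝ, 0 ≤ c₀ ∧ c₀ < 1 ∧ 0 < μ (C ⁻¹' Set.Iic c₀) := by
    have hcov : {ω | C ω < 1} ⊆ ⋃ n : ℕ, C ⁻¹' Set.Iic (1 - 1/((n:ℝ)+1)) := by
      intro ω hω
      obtain ⟨n, hn⟩ := exists_nat_one_div_lt (K := ℝ) (sub_pos.mpr hω)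
      refine Set.mem_iUnion.mpr ⟨n, ?_⟩
      simp only [Set.mem_preimage, Set.mem_Iic]
      linarith
    by_contra h
    push_neg at h
    have hz : μ (⋃ n : ℕ, C ⁻¹' Set.Iic (1 - 1/((n:ℝ)+1))) = 0 := by
      refine measure_iUnion_null fun n => ?_
      have hn1 : (0:ℝ) < 1/((n:ℝ)+1) := by positivity
      have h0 : (0:ℝ) ≤ 1 - 1/((n:ℝ)+1) := by
        have : 1/((n:ℝ)+1) ≤ 1 := by
          have hn0 : (0:ℝ) ≤ (n:ℝ) := Nat.cast_nonneg n
          rw [div_le_one (by positivity)]; linarith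
        linarith
      have := h (1 - 1/((n:ℝ)+1)) h0 (by linarith)
      exact le_antisymm this zero_le
    have := measure_mono (μ := μ) hcov
    rw [hz] at this
    exact absurd (le_antisymm this zero_le) hC1.ne'
  set S2 : Set (ℝ × ℝ) := {p | c₀ * p.2 < p.1 ∧ p.1 < p.2} with hS2def
  have hS2 : MeasurableSet S2 :=
    (measurableSet_lt (measurable_const.mul measurable_snd) measurable_fst).inter
      (measurableSet_lt measurable_fst measurable_snd)
  set E1 : Set Ω := {ω | Y ω < X ω} with hE1def
  set E2 : Set Ω := (fun ω => (X ω, Y ω)) ⁻¹' S2 ∩ C ⁻¹' Set.Iic c₀ with hE2def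
  have hE1meas : MeasurableSet E1 := measurableSet_lt hY hX
  have hE2meas : MeasurableSet E2 := (hXY hS2).inter (hC measurableSet_Iic)
  have hE1val : μ E1 = 1 / 2 := by
    have : E1 = (fun ω => (X ω, Y ω)) ⁻¹' {p : ℝ × ℝ | p.2 < p.1} := rfl
    rw [this, key _ (measurableSet_lt measurable_snd measurable_fst), aux_half ν hatomless]
  have hE2val : 0 < μ E2 := by
    rw [hE2def, hCindep.measure_inter_preimage_eq_mul _ _ hS2 measurableSet_Iic,
      key _ hS2]
    exact ENNReal.mul_pos (aux_pos ν hatomless hneg c₀ hc00 hc01).ne' hCc.ne'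
  have hdisj : Disjoint E1 E2 := by
    rw [Set.disjoint_left]
    rintro ω h1 ⟨h2, _⟩
    simp only [hE1def, Set.mem_setOf_eq] at h1
    simp only [Set.mem_preimage, hS2def, Set.mem_setOf_eq] at h2
    exact lt_asymm h1 h2.2
  have hsub : E1 ∪ E2 ⊆ {ω | Y ω * C ω < X ω} := by
    rintro ω (h1 | ⟨h2, hc⟩)
    · simp only [hE1def, Set.mem_setOf_eq] at h1
      have : Y ω * C ω ≤ Y ω := mul_le_of_le_one_right (hYpos ω) (hCrange ω).2
      exact lt_of_le_of_lt this h1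
    · simp only [Set.mem_preimage, hS2def, Set.mem_setOf_eq] at h2
      simp only [Set.mem_preimage, Set.mem_Iic] at hc
      have : Y ω * C ω ≤ Y ω * c₀ := mul_le_mul_of_nonneg_left hc (hYpos ω)
      calc Y ω * C ω ≤ Y ω * c₀ := this
        _ = c₀ * Y ω := mul_comm _ _
        _ < X ω := h2.1
  calc (1:ℝ≥0∞)/2 < 1/2 + μ E2 := ENNReal.lt_add_right (by norm_num) hE2val.ne'
    _ = μ E1 + μ E2 := by rw [hE1val]
    _ = μ (E1 ∪ E2) := (measure_union hdisj hE2meas).symm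
    _ ≤ μ {ω | Y ω * C ω < X ω} := measure_mono hsub
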